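/- If A ∈ M_n(ℂ) is invertible, then F_N(A) is a closed subset of ℂ. -/

import Mathlib

open Matrix

noncomputable def fN {n : ℕ} (A : Matrix (Fin n) (Fin n) ℂ)
    (x : EuclideanSpace ℂ (Fin n)) : ℂ :=
  (inner ℂ x (Matrix.toEuclideanLin A x) : ℂ) /
    ((‖x‖ * ‖Matrix.toEuclideanLin A x‖ : ℝ) : ℂ)

noncomputable def FN {n : ℕ} (A : Matrix (Fin n) (Fin n) ℂ) : Set ℂ :=
  {z | ∃ x : EuclideanSpace ℂ (Fin n), Matrix.toEuclideanLin A x ≠ 0 ∧ z = fN A x}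

lemma toE_ne {n : ℕ} (A : Matrix (Fin n) (Fin n) ℂ) (hA : IsUnit A)
    {x : EuclideanSpace ℂ (Fin n)} (hx : x ≠ 0) : Matrix.toEuclideanLin A x ≠ 0 := by
  intro h
  apply hx
  have hinj := mulVec_injective_iff_isUnit.2 hA
  have : A *ᵥ (WithLp.equiv 2 (Fin n → ℂ) x) = A *ᵥ 0 := by
    rw [Matrix.mulVec_zero]
    have := congrArg (WithLp.equiv 2 (Fin n → ℂ)) h
    simpa [Matrix.toEuclideanLin_apply] using this
  have := hinj this
  simpa using congrArg (WithLp.equiv 2 (Fin n → ℂ)).symm this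

lemma fN_smul {n : ℕ} (A : Matrix (Fin n) (Fin n) ℂ) (x : EuclideanSpace ℂ (Fin n))
    {c : ℝ} (hc : 0 < c) : fN A ((c : ℂ) • x) = fN A x := by
  unfold fN
  rw [_root_.map_smul, inner_smul_left, inner_smul_right, norm_smul, norm_smul]
  simp only [Complex.norm_real, Real.norm_eq_abs, abs_of_pos hc, RCLike.star_def, Complex.conj_ofReal]
  push_cast
  rw [show (c:ℂ) * ((c:ℂ) * inner ℂ x (Matrix.toEuclideanLin A x)) = ((c:ℂ)*(c:ℂ)) * inner ℂ x (Matrix.toEuclideanLin A x) from by ring,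
      show (c:ℂ) * ↑‖x‖ * ((c:ℂ) * ↑‖Matrix.toEuclideanLin A x‖) = ((c:ℂ)*(c:ℂ)) * (↑‖x‖ * ↑‖Matrix.toEuclideanLin A x‖) from by ring,
      mul_div_mul_left _ _ (mul_ne_zero (by exact_mod_cast hc.ne') (by exact_mod_cast hc.ne'))]

theorem stmt5 {n : ℕ} (A : Matrix (Fin n) (Fin n) ℂ) (hA : IsUnit A) :
    IsClosed (FN A) := by
  have hfe : FN A = fN A '' (Metric.sphere (0 : EuclideanSpace ℂ (Fin n)) 1) := by
    ext z
    constructor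
    · rintro ⟨x, hx, rfl⟩
      have hx0 : x ≠ 0 := by rintro rfl; simp at hx
      have hn : (0:ℝ) < ‖x‖ := norm_pos_iff.2 hx0
      refine ⟨(‖x‖⁻¹ : ℂ) • x, ?_, ?_⟩
      · simp [norm_smul, inv_mul_cancel₀ hn.ne']
      · rw [← Complex.ofReal_inv]
        exact fN_smul A x (inv_pos.2 hn)
    · rintro ⟨x, hx, rfl⟩
      have hx0 : x ≠ 0 := by
        rintro rfl; simp at hx
      exact ⟨x, toE_ne A hA hx0, rfl⟩
  rw [hfe]
  have hcomp : IsCompact (Metric.sphere (0 : EuclideanSpace ℂ (Fin n)) 1) :=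
    isCompact_sphere _ _
  have hcont : ContinuousOn (fN A) (Metric.sphere (0 : EuclideanSpace ℂ (Fin n)) 1) := by
    have hAc : Continuous fun x : EuclideanSpace ℂ (Fin n) => Matrix.toEuclideanLin A x :=
      (Matrix.toEuclideanLin A).continuous_of_finiteDimensional
    apply ContinuousOn.div
    · exact (continuous_id.inner (𝕜 := ℂ) hAc).continuousOn
    · exact (Complex.continuous_ofReal.comp (continuous_norm.mul (continuous_norm.comp hAc))).continuousOn
    · intro x hx
      have hx0 : x ≠ 0 := by rintro rfl; simp at hx
      have h1 : ‖x‖ = 1 := by simpa using hx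
      have h2 : Matrix.toEuclideanLin A x ≠ 0 := toE_ne A hA hx0
      simp [h1, norm_eq_zero, h2, Complex.ofReal_eq_zero]
  exact (hcomp.image_of_continuousOn hcont).isClosed
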